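/- Let A = [[a, 1], [1, 0]] and B = [[b, 1], [1, 0]] where a and b are distinct positive integers. Then ρ(AB) > (ρ(A)·ρ(B))^{0.885}, where ρ denotes the spectral radius. -/

import Mathlib

set_option maxRecDepth 10000

open Real

/-- The spectral radius of a real `2 × 2` matrix: the maximum of the absolute
values of its (complex) eigenvalues. -/
noncomputable def specRad (M : Matrix (Fin 2) (Fin 2) ℝ) : ℝ :=
  sSup ((fun z : ℂ => ‖z‖) '' spectrum ℂ (M.map (Complex.ofReal)))

lemma spectrum_fin_two (M : Matrix (Fin 2) (Fin 2) ℂ) (r s : ℂ)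
    (htr : M.trace = r + s) (hdet : M.det = r * s) :
    spectrum ℂ M = {r, s} := by
  have htr' : M 0 0 + M 1 1 = r + s := by simpa [Matrix.trace_fin_two] using htr
  have hdet' : M 0 0 * M 1 1 - M 0 1 * M 1 0 = r * s := by
    simpa [Matrix.det_fin_two] using hdet
  ext mu
  rw [spectrum.mem_iff, Matrix.isUnit_iff_isUnit_det, isUnit_iff_ne_zero, not_not]
  have h1 : (algebraMap ℂ (Matrix (Fin 2) (Fin 2) ℂ)) mu - M
      = !![mu - M 0 0, -M 0 1; -M 1 0, mu - M 1 1] := by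
    ext i j
    fin_cases i <;> fin_cases j <;>
      simp [Matrix.algebraMap_eq_diagonal, Matrix.diagonal]
  rw [h1, Matrix.det_fin_two_of]
  have key : (mu - M 0 0) * (mu - M 1 1) - (-M 0 1) * (-M 1 0)
      = (mu - r) * (mu - s) := by
    linear_combination (-mu) * htr' + hdet'
  rw [key, mul_eq_zero, sub_eq_zero, sub_eq_zero]
  simp [Set.mem_insert_iff]

lemma specRad_eq (M : Matrix (Fin 2) (Fin 2) ℝ) (r s : ℝ)
    (htr : M.trace = r + s) (hdet : M.det = r * s) (h : |s| ≤ r) :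
    specRad M = r := by
  have htr0 : M 0 0 + M 1 1 = r + s := by simpa [Matrix.trace_fin_two] using htr
  have hdet0 : M 0 0 * M 1 1 - M 0 1 * M 1 0 = r * s := by
    simpa [Matrix.det_fin_two] using hdet
  have htr2 : (M.map (Complex.ofReal)).trace = ((r : ℂ)) + s := by
    simp [Matrix.trace_fin_two, Matrix.map_apply]
    norm_cast
  have hdet2 : (M.map (Complex.ofReal)).det = ((r : ℂ)) * s := by
    simp [Matrix.det_fin_two, Matrix.map_apply]
    norm_cast
  rw [specRad, spectrum_fin_two _ _ _ htr2 hdet2, Set.image_pair, csSup_pair]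
  have hr : ‖(r:ℂ)‖ = r := by
    rw [Complex.norm_real, Real.norm_eq_abs]; exact abs_of_nonneg ((abs_nonneg s).trans h)
  have hs : ‖(s:ℂ)‖ = |s| := by rw [Complex.norm_real, Real.norm_eq_abs]
  show ‖(r:ℂ)‖ ⊔ ‖(s:ℂ)‖ = r
  rw [hr, hs]
  exact sup_eq_left.2 h

lemma specRad_single (x : ℝ) (hx : 0 ≤ x) :
    specRad !![x, 1; 1, 0] = (x + Real.sqrt (x^2+4))/2 := by
  have h4 : (0:ℝ) ≤ x^2 + 4 := by positivity
  have hs := Real.sqrt_nonneg (x^2+4)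
  have hsq := Real.sq_sqrt h4
  apply specRad_eq _ _ ((x - Real.sqrt (x^2+4))/2)
  · simp [Matrix.trace_fin_two]; ring
  · simp [Matrix.det_fin_two]; nlinarith [hsq]
  · rw [abs_le]
    constructor
    · nlinarith [Real.sqrt_le_sqrt (show x^2 ≤ x^2+4 by linarith), Real.sqrt_sq hx]
    · nlinarith

lemma specRad_prod (x y : ℝ) (hx : 0 ≤ x) (hy : 0 ≤ y) :
    specRad (!![x, 1; 1, 0] * !![y, 1; 1, 0])
      = (x*y+2 + Real.sqrt ((x*y+2)^2-4))/2 := by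
  have hM : !![x, 1; 1, 0] * !![y, 1; 1, 0] = !![x*y+1, x; y, 1] := by
    rw [Matrix.mul_fin_two]; norm_num
  have h4 : (0:ℝ) ≤ (x*y+2)^2 - 4 := by nlinarith [mul_nonneg hx hy]
  have hs := Real.sqrt_nonneg ((x*y+2)^2-4)
  have hsq := Real.sq_sqrt h4
  have hle : Real.sqrt ((x*y+2)^2-4) ≤ x*y+2 := by
    rw [Real.sqrt_le_iff]; constructor <;> nlinarith [mul_nonneg hx hy]
  rw [hM]
  apply specRad_eq _ _ ((x*y+2 - Real.sqrt ((x*y+2)^2-4))/2)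
  · simp [Matrix.trace_fin_two]; ring
  · simp [Matrix.det_fin_two]; nlinarith [hsq]
  · rw [abs_le]; constructor <;> nlinarith

lemma rpow_red {P R : ℝ} (hP : 0 ≤ P) (hR : 0 < R)
    (h : P^(177:ℕ) < R^(200:ℕ)) : P^(0.885:ℝ) < R := by
  have e1 : P^(0.885:ℝ) = (P^(177:ℕ))^((1:ℝ)/200) := by
    rw [← Real.rpow_natCast P 177, ← Real.rpow_mul hP]; norm_num
  have e2 : R = (R^(200:ℕ))^((1:ℝ)/200) := by
    rw [← Real.rpow_natCast R 200, ← Real.rpow_mul hR.le]; norm_num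
  rw [e1]
  calc (P^(177:ℕ))^((1:ℝ)/200) < (R^(200:ℕ))^((1:ℝ)/200) :=
        Real.rpow_lt_rpow (pow_nonneg hP _) h (by norm_num)
    _ = R := e2.symm

/-- The central inequality, as a statement about real numbers. -/
def G (x y : ℝ) : Prop :=
  ((x + Real.sqrt (x^2+4))/2 * ((y + Real.sqrt (y^2+4))/2))^(177:ℕ)
    < ((x*y+2 + Real.sqrt ((x*y+2)^2-4))/2)^(200:ℕ)

lemma sqrt_ub {x u : ℝ} (hu : 0 ≤ u) (h : x^2 + 4 ≤ u^2) :
    Real.sqrt (x^2+4) ≤ u := Real.sqrt_le_iff.2 ⟨hu, h⟩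

lemma num_case (a b : ℕ) (ua ub l : ℚ) (hua0 : 0 ≤ ua) (hub0 : 0 ≤ ub) (hl0 : 0 ≤ l)
    (hua : (a:ℚ)^2+4 ≤ ua^2) (hub : (b:ℚ)^2+4 ≤ ub^2)
    (hl : l^2 ≤ ((a:ℚ)*b+2)^2-4)
    (key : ((((a:ℚ)+ua)/2) * (((b:ℚ)+ub)/2))^(177:ℕ) < ((((a:ℚ)*b+2)+l)/2)^(200:ℕ)) :
    G (a:ℝ) (b:ℝ) := by
  unfold G
  set x : ℝ := (a:ℝ) with hx
  set y : ℝ := (b:ℝ) with hy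
  have hx0 : 0 ≤ x := by positivity
  have hy0 : 0 ≤ y := by positivity
  have h1 : Real.sqrt (x^2+4) ≤ (ua:ℝ) :=
    sqrt_ub (by exact_mod_cast hua0) (by rw [hx]; exact_mod_cast hua)
  have h2 : Real.sqrt (y^2+4) ≤ (ub:ℝ) :=
    sqrt_ub (by exact_mod_cast hub0) (by rw [hy]; exact_mod_cast hub)
  have h3 : ((l:ℝ)) ≤ Real.sqrt ((x*y+2)^2-4) := by
    apply Real.le_sqrt_of_sq_le
    rw [hx, hy]
    exact_mod_cast hl
  have hsx := Real.sqrt_nonneg (x^2+4)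
  have hsy := Real.sqrt_nonneg (y^2+4)
  have hP : (x + Real.sqrt (x^2+4))/2 * ((y + Real.sqrt (y^2+4))/2)
      ≤ ((x+(ua:ℝ))/2) * ((y+(ub:ℝ))/2) := by
    apply mul_le_mul (by linarith) (by linarith) (by linarith) (by positivity)
  have hR : ((x*y+2)+(l:ℝ))/2 ≤ (x*y+2 + Real.sqrt ((x*y+2)^2-4))/2 := by linarith
  have key' : (((x+(ua:ℝ))/2) * ((y+(ub:ℝ))/2))^(177:ℕ) < (((x*y+2)+(l:ℝ))/2)^(200:ℕ) := by
    rw [hx, hy]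
    exact_mod_cast key
  have hl0' : (0:ℝ) ≤ (l:ℝ) := by exact_mod_cast hl0
  calc ((x + Real.sqrt (x^2+4))/2 * ((y + Real.sqrt (y^2+4))/2))^(177:ℕ)
      ≤ (((x+(ua:ℝ))/2) * ((y+(ub:ℝ))/2))^(177:ℕ) := by
        apply pow_le_pow_left₀ (by positivity) hP
    _ < (((x*y+2)+(l:ℝ))/2)^(200:ℕ) := key'
    _ ≤ ((x*y+2 + Real.sqrt ((x*y+2)^2-4))/2)^(200:ℕ) := by
        apply pow_le_pow_left₀ (by positivity) hR

lemma tail1 (y : ℝ) (hy : 40 ≤ y) : G 1 y := by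
  unfold G
  have hy0 : (0:ℝ) < y := by linarith
  have hsy := Real.sqrt_nonneg (y^2+4)
  have h5 : Real.sqrt ((1:ℝ)^2+4) < 2.238 := by
    rw [Real.sqrt_lt' (by norm_num)]
    norm_num
  have h2 : Real.sqrt (y^2+4) ≤ y + 0.1 := by
    apply sqrt_ub (by linarith)
    nlinarith
  have h3 : y + 1 ≤ Real.sqrt ((1*y+2)^2-4) := by
    apply Real.le_sqrt_of_sq_le
    nlinarith
  set R : ℝ := (1*y+2 + Real.sqrt ((1*y+2)^2-4))/2 with hRdef
  have hR1 : y + 1.5 ≤ R := by rw [hRdef]; linarith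
  have hR415 : (41.5:ℝ) ≤ R := by linarith
  have hR0 : (0:ℝ) < R := by linarith
  set P : ℝ := ((1:ℝ) + Real.sqrt ((1:ℝ)^2+4))/2 * ((y + Real.sqrt (y^2+4))/2) with hPdef
  have hP0 : 0 ≤ P := by
    rw [hPdef]
    have := Real.sqrt_nonneg ((1:ℝ)^2+4)
    positivity
  have hP : P < 1.619 * R := by
    rw [hPdef]
    have hb : (y + Real.sqrt (y^2+4))/2 ≤ y + 0.05 := by linarith
    have ha : ((1:ℝ) + Real.sqrt ((1:ℝ)^2+4))/2 < 1.619 := by linarith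
    have hbpos : (0:ℝ) < (y + Real.sqrt (y^2+4))/2 := by positivity
    calc ((1:ℝ) + Real.sqrt ((1:ℝ)^2+4))/2 * ((y + Real.sqrt (y^2+4))/2)
        < 1.619 * ((y + Real.sqrt (y^2+4))/2) := by
          exact mul_lt_mul_of_pos_right ha hbpos
      _ ≤ 1.619 * (y + 0.05) := by nlinarith
      _ ≤ 1.619 * R := by nlinarith
  have hpow : (1.619:ℝ)^(177:ℕ) ≤ R^(23:ℕ) :=
    le_trans (by norm_num) (pow_le_pow_left₀ (by norm_num) hR415 23)
  calc P^(177:ℕ) < (1.619 * R)^(177:ℕ) := by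
        exact pow_lt_pow_left₀ hP hP0 (by norm_num)
    _ = (1.619:ℝ)^(177:ℕ) * R^(177:ℕ) := mul_pow _ _ _
    _ ≤ R^(23:ℕ) * R^(177:ℕ) := by
        exact mul_le_mul_of_nonneg_right hpow (by positivity)
    _ = R^(200:ℕ) := by rw [← pow_add]

lemma tail2 (x y : ℝ) (hx2 : 2 ≤ x) (hxy : x + 1 ≤ y) (h10 : 10 ≤ x*y) : G x y := by
  unfold G
  have hx0 : (0:ℝ) < x := by linarith
  have hy0 : (0:ℝ) < y := by linarith
  have hsx := Real.sqrt_nonneg (x^2+4)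
  have hsy := Real.sqrt_nonneg (y^2+4)
  have h1 : Real.sqrt (x^2+4) ≤ x + 2/x := by
    apply sqrt_ub (by positivity)
    have : (x + 2/x)^2 = x^2 + 4 + 4/x^2 := by field_simp; ring
    have h4x : (0:ℝ) ≤ 4/x^2 := by positivity
    linarith
  have h2 : Real.sqrt (y^2+4) ≤ y + 2/y := by
    apply sqrt_ub (by positivity)
    have : (y + 2/y)^2 = y^2 + 4 + 4/y^2 := by field_simp; ring
    have h4y : (0:ℝ) ≤ 4/y^2 := by positivity
    linarith
  have h3 : x*y + 1 ≤ Real.sqrt ((x*y+2)^2-4) := by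
    apply Real.le_sqrt_of_sq_le
    nlinarith
  set R : ℝ := (x*y+2 + Real.sqrt ((x*y+2)^2-4))/2 with hRdef
  have hR1 : x*y + 1.5 ≤ R := by rw [hRdef]; linarith
  have hR115 : (11.5:ℝ) ≤ R := by linarith
  have hR0 : (0:ℝ) < R := by linarith
  set P : ℝ := (x + Real.sqrt (x^2+4))/2 * ((y + Real.sqrt (y^2+4))/2) with hPdef
  have hP0 : 0 ≤ P := by rw [hPdef]; positivity
  have hmid : (x + 1/x) * (y + 1/y) < 1.36 * (x*y + 1.5) := by
    have e : (x + 1/x) * (y + 1/y) = (x^2+1)*(y^2+1)/(x*y) := by field_simp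
    rw [e, div_lt_iff₀ (by positivity)]
    nlinarith [mul_nonneg (mul_nonneg (sq_nonneg x) hy0.le) hy0.le,
      mul_nonneg (sub_nonneg.2 hx2) hy0.le, mul_pos hx0 (show (0:ℝ) < y - x by linarith),
      sq_nonneg (x*y), mul_le_mul_of_nonneg_right (show 4 ≤ x^2 by nlinarith) (sq_nonneg y)]
  have hP : P < 1.36 * R := by
    have ea : (x + Real.sqrt (x^2+4))/2 ≤ x + 1/x := by
      rw [show x + 1/x = (x + (x + 2*(1/x)))/2 by ring]
      have : 2/x = 2*(1/x) := by ring
      linarith [this ▸ h1]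
    have eb : (y + Real.sqrt (y^2+4))/2 ≤ y + 1/y := by
      rw [show y + 1/y = (y + (y + 2*(1/y)))/2 by ring]
      have : 2/y = 2*(1/y) := by ring
      linarith [this ▸ h2]
    have hPle : P ≤ (x + 1/x) * (y + 1/y) := by
      rw [hPdef]
      apply mul_le_mul ea eb (by positivity) (by positivity)
    have : 1.36 * (x*y + 1.5) ≤ 1.36 * R := by nlinarith
    linarith
  have hpow : (1.36:ℝ)^(177:ℕ) ≤ R^(23:ℕ) :=
    le_trans (by norm_num) (pow_le_pow_left₀ (by norm_num) hR115 23)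
  calc P^(177:ℕ) < (1.36 * R)^(177:ℕ) := by
        exact pow_lt_pow_left₀ hP hP0 (by norm_num)
    _ = (1.36:ℝ)^(177:ℕ) * R^(177:ℕ) := mul_pow _ _ _
    _ ≤ R^(23:ℕ) * R^(177:ℕ) := by
        exact mul_le_mul_of_nonneg_right hpow (by positivity)
    _ = R^(200:ℕ) := by rw [← pow_add]

lemma key_nat (a b : ℕ) (ha : 1 ≤ a) (hab : a < b) : G (a:ℝ) (b:ℝ) := by
  rcases Nat.lt_or_ge a 2 with h2 | h2
  · have ha1 : a = 1 := by omega
    subst ha1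
    rcases Nat.lt_or_ge b 40 with h40 | h40
    · interval_cases b
      · exact num_case 1 2 (559017/250000 : ℚ) (1767767/625000 : ℚ) (4330127/1250000 : ℚ) (by norm_num) (by norm_num) (by norm_num) (by norm_num) (by norm_num) (by norm_num) (by norm_num)
      · exact num_case 1 3 (559017/250000 : ℚ) (36055513/10000000 : ℚ) (11456439/2500000 : ℚ) (by norm_num) (by norm_num) (by norm_num) (by norm_num) (by norm_num) (by norm_num) (by norm_num)
      · exact num_case 1 4 (559017/250000 : ℚ) (559017/125000 : ℚ) (28284271/5000000 : ℚ) (by norm_num) (by norm_num) (by norm_num) (by norm_num) (by norm_num) (by norm_num) (by norm_num)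
      · exact num_case 1 5 (559017/250000 : ℚ) (53851649/10000000 : ℚ) (67082039/10000000 : ℚ) (by norm_num) (by norm_num) (by norm_num) (by norm_num) (by norm_num) (by norm_num) (by norm_num)
      · exact num_case 1 6 (559017/250000 : ℚ) (31622777/5000000 : ℚ) (38729833/5000000 : ℚ) (by norm_num) (by norm_num) (by norm_num) (by norm_num) (by norm_num) (by norm_num) (by norm_num)
      · exact num_case 1 7 (559017/250000 : ℚ) (72801099/10000000 : ℚ) (87749643/10000000 : ℚ) (by norm_num) (by norm_num) (by norm_num) (by norm_num) (by norm_num) (by norm_num) (by norm_num)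
      · exact num_case 1 8 (559017/250000 : ℚ) (82462113/10000000 : ℚ) (97979589/10000000 : ℚ) (by norm_num) (by norm_num) (by norm_num) (by norm_num) (by norm_num) (by norm_num) (by norm_num)
      · exact num_case 1 9 (559017/250000 : ℚ) (18439089/2000000 : ℚ) (54083269/5000000 : ℚ) (by norm_num) (by norm_num) (by norm_num) (by norm_num) (by norm_num) (by norm_num) (by norm_num)
      · exact num_case 1 10 (559017/250000 : ℚ) (101980391/10000000 : ℚ) (23664319/2000000 : ℚ) (by norm_num) (by norm_num) (by norm_num) (by norm_num) (by norm_num) (by norm_num) (by norm_num)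
      · exact num_case 1 11 (559017/250000 : ℚ) (111803399/10000000 : ℚ) (5138093/400000 : ℚ) (by norm_num) (by norm_num) (by norm_num) (by norm_num) (by norm_num) (by norm_num) (by norm_num)
      · exact num_case 1 12 (559017/250000 : ℚ) (121655251/10000000 : ℚ) (4330127/312500 : ℚ) (by norm_num) (by norm_num) (by norm_num) (by norm_num) (by norm_num) (by norm_num) (by norm_num)
      · exact num_case 1 13 (559017/250000 : ℚ) (26305893/2000000 : ℚ) (148660687/10000000 : ℚ) (by norm_num) (by norm_num) (by norm_num) (by norm_num) (by norm_num) (by norm_num) (by norm_num)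
      · exact num_case 1 14 (559017/250000 : ℚ) (141421357/10000000 : ℚ) (79372539/5000000 : ℚ) (by norm_num) (by norm_num) (by norm_num) (by norm_num) (by norm_num) (by norm_num) (by norm_num)
      · exact num_case 1 15 (559017/250000 : ℚ) (7566373/500000 : ℚ) (16881943/1000000 : ℚ) (by norm_num) (by norm_num) (by norm_num) (by norm_num) (by norm_num) (by norm_num) (by norm_num)
      · exact num_case 1 16 (559017/250000 : ℚ) (32249031/2000000 : ℚ) (89442719/5000000 : ℚ) (by norm_num) (by norm_num) (by norm_num) (by norm_num) (by norm_num) (by norm_num) (by norm_num)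
      · exact num_case 1 17 (559017/250000 : ℚ) (42793107/2500000 : ℚ) (47236109/2500000 : ℚ) (by norm_num) (by norm_num) (by norm_num) (by norm_num) (by norm_num) (by norm_num) (by norm_num)
      · exact num_case 1 18 (559017/250000 : ℚ) (181107703/10000000 : ℚ) (198997487/10000000 : ℚ) (by norm_num) (by norm_num) (by norm_num) (by norm_num) (by norm_num) (by norm_num) (by norm_num)
      · exact num_case 1 19 (559017/250000 : ℚ) (47762433/2500000 : ℚ) (209045449/10000000 : ℚ) (by norm_num) (by norm_num) (by norm_num) (by norm_num) (by norm_num) (by norm_num) (by norm_num)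
      · exact num_case 1 20 (559017/250000 : ℚ) (200997513/10000000 : ℚ) (219089023/10000000 : ℚ) (by norm_num) (by norm_num) (by norm_num) (by norm_num) (by norm_num) (by norm_num) (by norm_num)
      · exact num_case 1 21 (559017/250000 : ℚ) (26368779/1250000 : ℚ) (14320549/625000 : ℚ) (by norm_num) (by norm_num) (by norm_num) (by norm_num) (by norm_num) (by norm_num) (by norm_num)
      · exact num_case 1 22 (559017/250000 : ℚ) (220907221/10000000 : ℚ) (119582607/5000000 : ℚ) (by norm_num) (by norm_num) (by norm_num) (by norm_num) (by norm_num) (by norm_num) (by norm_num)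
      · exact num_case 1 23 (559017/250000 : ℚ) (28858491/1250000 : ℚ) (49839743/2000000 : ℚ) (by norm_num) (by norm_num) (by norm_num) (by norm_num) (by norm_num) (by norm_num) (by norm_num)
      · exact num_case 1 24 (559017/250000 : ℚ) (60207973/2500000 : ℚ) (259229627/10000000 : ℚ) (by norm_num) (by norm_num) (by norm_num) (by norm_num) (by norm_num) (by norm_num) (by norm_num)
      · exact num_case 1 25 (559017/250000 : ℚ) (10031949/400000 : ℚ) (420716/15625 : ℚ) (by norm_num) (by norm_num) (by norm_num) (by norm_num) (by norm_num) (by norm_num) (by norm_num)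
      · exact num_case 1 26 (559017/250000 : ℚ) (260768097/10000000 : ℚ) (174553/6250 : ℚ) (by norm_num) (by norm_num) (by norm_num) (by norm_num) (by norm_num) (by norm_num) (by norm_num)
      · exact num_case 1 27 (559017/250000 : ℚ) (16921233/625000 : ℚ) (144654761/5000000 : ℚ) (by norm_num) (by norm_num) (by norm_num) (by norm_num) (by norm_num) (by norm_num) (by norm_num)
      · exact num_case 1 28 (559017/250000 : ℚ) (280713377/10000000 : ℚ) (29933259/1000000 : ℚ) (by norm_num) (by norm_num) (by norm_num) (by norm_num) (by norm_num) (by norm_num) (by norm_num)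
      · exact num_case 1 29 (559017/250000 : ℚ) (145344419/5000000 : ℚ) (61870833/2000000 : ℚ) (by norm_num) (by norm_num) (by norm_num) (by norm_num) (by norm_num) (by norm_num) (by norm_num)
      · exact num_case 1 30 (559017/250000 : ℚ) (37583241/1250000 : ℚ) (79843597/2500000 : ℚ) (by norm_num) (by norm_num) (by norm_num) (by norm_num) (by norm_num) (by norm_num) (by norm_num)
      · exact num_case 1 31 (559017/250000 : ℚ) (77661123/2500000 : ℚ) (329393381/10000000 : ℚ) (by norm_num) (by norm_num) (by norm_num) (by norm_num) (by norm_num) (by norm_num) (by norm_num)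
      · exact num_case 1 32 (559017/250000 : ℚ) (320624391/10000000 : ℚ) (169705627/5000000 : ℚ) (by norm_num) (by norm_num) (by norm_num) (by norm_num) (by norm_num) (by norm_num) (by norm_num)
      · exact num_case 1 33 (559017/250000 : ℚ) (165302753/5000000 : ℚ) (43678513/1250000 : ℚ) (by norm_num) (by norm_num) (by norm_num) (by norm_num) (by norm_num) (by norm_num) (by norm_num)
      · exact num_case 1 34 (559017/250000 : ℚ) (21286733/625000 : ℚ) (71888803/2000000 : ℚ) (by norm_num) (by norm_num) (by norm_num) (by norm_num) (by norm_num) (by norm_num) (by norm_num)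
      · exact num_case 1 35 (559017/250000 : ℚ) (350570963/10000000 : ℚ) (46182383/1250000 : ℚ) (by norm_num) (by norm_num) (by norm_num) (by norm_num) (by norm_num) (by norm_num) (by norm_num)
      · exact num_case 1 36 (559017/250000 : ℚ) (45069391/1250000 : ℚ) (379473319/10000000 : ℚ) (by norm_num) (by norm_num) (by norm_num) (by norm_num) (by norm_num) (by norm_num) (by norm_num)
      · exact num_case 1 37 (559017/250000 : ℚ) (370540147/10000000 : ℚ) (389486841/10000000 : ℚ) (by norm_num) (by norm_num) (by norm_num) (by norm_num) (by norm_num) (by norm_num) (by norm_num)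
      · exact num_case 1 38 (559017/250000 : ℚ) (2972859/78125 : ℚ) (399499687/10000000 : ℚ) (by norm_num) (by norm_num) (by norm_num) (by norm_num) (by norm_num) (by norm_num) (by norm_num)
      · exact num_case 1 39 (559017/250000 : ℚ) (97628121/2500000 : ℚ) (12797247/312500 : ℚ) (by norm_num) (by norm_num) (by norm_num) (by norm_num) (by norm_num) (by norm_num) (by norm_num)
    · rw [show (((1:ℕ)):ℝ) = 1 from Nat.cast_one]
      exact tail1 (b:ℝ) (by exact_mod_cast h40)
  · rcases Nat.lt_or_ge (a*b) 10 with h10 | h10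
    · have hb3 : 3 ≤ b := by omega
      have ha2 : a = 2 := by nlinarith
      subst ha2
      have hb4 : b ≤ 4 := by omega
      interval_cases b
      · exact num_case 2 3 (1767767/625000 : ℚ) (36055513/10000000 : ℚ) (38729833/5000000 : ℚ) (by norm_num) (by norm_num) (by norm_num) (by norm_num) (by norm_num) (by norm_num) (by norm_num)
      · exact num_case 2 4 (1767767/625000 : ℚ) (559017/125000 : ℚ) (97979589/10000000 : ℚ) (by norm_num) (by norm_num) (by norm_num) (by norm_num) (by norm_num) (by norm_num) (by norm_num)
    · apply tail2 (a:ℝ) (b:ℝ) (by exact_mod_cast h2)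
        (by exact_mod_cast (show (a:ℝ)+1 ≤ b by exact_mod_cast Nat.succ_le_of_lt hab))
        (by exact_mod_cast h10)

/-- If `A = [[a,1],[1,0]]` and `B = [[b,1],[1,0]]` with `a ≠ b` positive
integers, then `ρ(AB) > (ρ(A) ρ(B))^0.885`. -/
theorem specRad_mul_gt (a b : ℕ) (ha : 0 < a) (hb : 0 < b) (hab : a ≠ b) :
    specRad (!![(a : ℝ), 1; 1, 0] * !![(b : ℝ), 1; 1, 0]) >
      (specRad !![(a : ℝ), 1; 1, 0] * specRad !![(b : ℝ), 1; 1, 0]) ^ (0.885 : ℝ) := by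
  have hx0 : (0:ℝ) ≤ (a:ℝ) := by positivity
  have hy0 : (0:ℝ) ≤ (b:ℝ) := by positivity
  rw [specRad_single _ hx0, specRad_single _ hy0, specRad_prod _ _ hx0 hy0]
  have hsx := Real.sqrt_nonneg (((a:ℝ))^2+4)
  have hsy := Real.sqrt_nonneg (((b:ℝ))^2+4)
  have hsz := Real.sqrt_nonneg (((a:ℝ)*b+2)^2-4)
  apply rpow_red
  · positivity
  · positivity
  · rcases lt_trichotomy a b with h | h | h
    · exact key_nat a b ha h
    · exact absurd h hab
    · have := key_nat b a hb h
      unfold G at this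
      have e : ((b:ℝ))*((a:ℝ)) = ((a:ℝ))*((b:ℝ)) := mul_comm _ _
      rw [e] at this
      rw [mul_comm (((b:ℝ) + Real.sqrt (((b:ℝ))^2+4))/2)] at this
      exact this
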